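/- If G is strictly lower triangular over a field and T = (I - G)^{-1}, then for any l > j, knowledge of the entries T_{ki} for all pairs with j ≤ i < k ≤ l uniquely determines G_{lj}; that is, if two strictly lower triangular matrices G and G' yield matrices T and T' agreeing on all such entries, then G_{lj} = G'_{lj}. -/

import Mathlib

open Matrix Finset

/-- A strictly lower triangular matrix subtracted from one is block triangular
(w.r.t. `toDual`). -/
lemma stmt_18_blockTri {n : ℕ} {K : Type*} [Field K] (G : Matrix (Fin n) (Fin n) K)
    (hG : ∀ i j : Fin n, i ≤ j → G i j = 0) :
    (1 - G).BlockTriangular OrderDual.toDual := by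
  intro i j hij
  have hij' : i < j := hij
  simp [Matrix.one_apply, hij'.ne, hG i j hij'.le]

lemma stmt_18_detUnit {n : ℕ} {K : Type*} [Field K] (G : Matrix (Fin n) (Fin n) K)
    (hG : ∀ i j : Fin n, i ≤ j → G i j = 0) : IsUnit (1 - G).det := by
  rw [Matrix.det_of_lowerTriangular _ (stmt_18_blockTri G hG)]
  have : ∀ i : Fin n, (1 - G) i i = 1 := by
    intro i; simp [Matrix.one_apply, hG i i le_rfl]
  simp [this]

lemma stmt_18_Tlow {n : ℕ} {K : Type*} [Field K] (G : Matrix (Fin n) (Fin n) K)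
    (hG : ∀ i j : Fin n, i ≤ j → G i j = 0) {i j : Fin n} (h : i < j) :
    (1 - G)⁻¹ i j = 0 := by
  haveI := (1 - G).invertibleOfIsUnitDet (stmt_18_detUnit G hG)
  exact Matrix.blockTriangular_inv_of_blockTriangular (stmt_18_blockTri G hG) h

lemma stmt_18_Tdiag {n : ℕ} {K : Type*} [Field K] (G : Matrix (Fin n) (Fin n) K)
    (hG : ∀ i j : Fin n, i ≤ j → G i j = 0) (m : Fin n) :
    (1 - G)⁻¹ m m = 1 := by
  have hmul := Matrix.nonsing_inv_mul (1 - G) (stmt_18_detUnit G hG)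
  have h := congrFun (congrFun hmul m) m
  rw [Matrix.mul_apply] at h
  rw [show ((1 : Matrix (Fin n) (Fin n) K)) m m = 1 by simp] at h
  rw [Finset.sum_eq_single m] at h
  · simpa [Matrix.one_apply, hG m m le_rfl] using h
  · intro p _ hp
    rcases lt_or_gt_of_ne hp with hlt | hgt
    · simp [Matrix.one_apply, hp, hG p m hlt.le]
    · simp [stmt_18_Tlow G hG hgt]
  · simp

/-- The key formula: `G m j` is determined by entries of `T = (1-G)⁻¹` and
entries `G p j` with `p < m`. -/
lemma stmt_18_formula {n : ℕ} {K : Type*} [Field K] (G : Matrix (Fin n) (Fin n) K)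
    (hG : ∀ i j : Fin n, i ≤ j → G i j = 0) (m j : Fin n) (hjm : j < m) :
    G m j = (1 - G)⁻¹ m j - ∑ p ∈ Finset.Ioo j m, (1 - G)⁻¹ m p * G p j := by
  set T := (1 - G)⁻¹ with hT
  have hmul := Matrix.nonsing_inv_mul (1 - G) (stmt_18_detUnit G hG)
  have h := congrFun (congrFun hmul m) j
  rw [Matrix.mul_apply] at h
  rw [show ((1 : Matrix (Fin n) (Fin n) K)) m j = 0 by simp [Matrix.one_apply, hjm.ne']] at h
  have hsplit : ∀ p : Fin n, T m p * (1 - G) p j = T m p * (if p = j then 1 else 0) - T m p * G p j := by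
    intro p
    simp [Matrix.one_apply, mul_sub]
  replace h : (∑ p : Fin n, T m p * (1 - G) p j) = 0 := h
  simp only [hsplit] at h
  rw [Finset.sum_sub_distrib] at h
  have h1 : (∑ p : Fin n, T m p * (if p = j then 1 else 0)) = T m j := by
    rw [Finset.sum_eq_single j] <;> simp +contextual
  rw [h1] at h
  have h2 : (∑ p : Fin n, T m p * G p j) = ∑ p ∈ Finset.Ioc j m, T m p * G p j := by
    symm
    apply Finset.sum_subset (Finset.subset_univ _)
    intro p _ hp
    rw [Finset.mem_Ioc, not_and_or, not_lt, not_le] at hp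
    rcases hp with hp | hp
    · simp [hG p j hp]
    · rw [show T m p = 0 from stmt_18_Tlow G hG hp, zero_mul]
  rw [h2] at h
  have h3 : (∑ p ∈ Finset.Ioc j m, T m p * G p j)
      = T m m * G m j + ∑ p ∈ Finset.Ioo j m, T m p * G p j := by
    rw [← Finset.add_sum_erase _ _ (Finset.mem_Ioc.2 ⟨hjm, le_rfl⟩), Finset.Ioc_erase_right]
  rw [h3, show T m m = 1 from stmt_18_Tdiag G hG m, one_mul] at h
  linear_combination -h

/-- If two strictly lower triangular matrices `G`, `G'` yield transfer matrices
`T = (I - G)⁻¹`, `T' = (I - G')⁻¹` that agree on all entries `T k i` with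
`j ≤ i < k ≤ l`, then `G l j = G' l j`: the entry `G l j` is uniquely determined
by those entries of `T`. -/
theorem stmt_18 {n : ℕ} {K : Type*} [Field K] (G G' T T' : Matrix (Fin n) (Fin n) K)
    (hG : ∀ i j : Fin n, i ≤ j → G i j = 0)
    (hG' : ∀ i j : Fin n, i ≤ j → G' i j = 0)
    (hT : T = (1 - G)⁻¹) (hT' : T' = (1 - G')⁻¹)
    (l j : Fin n) (hlj : j < l)
    (hagree : ∀ k i : Fin n, j ≤ i → i < k → k ≤ l → T k i = T' k i) :
    G l j = G' l j := by
  subst hT hT'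
  have key : ∀ N : ℕ, ∀ m : Fin n, (m : ℕ) = N → j < m → m ≤ l → G m j = G' m j := by
    intro N
    induction N using Nat.strong_induction_on with
    | _ N ih =>
      intro m hmN hjm hml
      rw [stmt_18_formula G hG m j hjm, stmt_18_formula G' hG' m j hjm]
      rw [hagree m j le_rfl hjm hml]
      congr 1
      apply Finset.sum_congr rfl
      intro p hp
      rw [Finset.mem_Ioo] at hp
      rw [hagree m p hp.1.le hp.2 hml,
        ih p (hmN ▸ hp.2) p rfl hp.1 (hp.2.le.trans hml)]
  exact key l l rfl hlj le_rfl
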